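/- Let m ≥ 4 and 1 ≤ k < m, ℓ = gcd(k, m). The number of 4-element subsets {x₁, x₂, x₃, x₄} of F_{2^m}* consisting of pairwise distinct nonzero elements with Tr(x₁) = Tr(x₂) = Tr(x₃) = Tr(x₄) = 1, x₁ + x₂ + x₃ + x₄ = 0, and x₁^{2^k+1} + x₂^{2^k+1} + x₃^{2^k+1} + x₄^{2^k+1} = 0, equals 2^{m-1}(2^{m-2} - 1)(2^ℓ - 2)/4!. -/

import Mathlib

open Finset
open scoped Classical

noncomputable instance (m : ℕ) : Fintype (GaloisField 2 m) := Fintype.ofFinite _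

noncomputable def Tr (m : ℕ) : GaloisField 2 m → ZMod 2 :=
  Algebra.trace (ZMod 2) (GaloisField 2 m)

theorem gcd_two_pow_sub_one (a b : ℕ) : Nat.gcd (2^a - 1) (2^b - 1) = 2^(Nat.gcd a b) - 1 := by
  have key : ∀ n a b, a + b ≤ n → Nat.gcd (2^a - 1) (2^b - 1) = 2^(Nat.gcd a b) - 1 := by
    intro n
    induction n with
    | zero =>
      intro a b h
      have h0 : a + b = 0 := Nat.le_zero.mp h
      have ha : a = 0 := by omega
      have hb : b = 0 := by omega
      subst ha; subst hb; simp
    | succ n ih =>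
      intro a b hab
      rcases Nat.eq_zero_or_pos a with ha | ha
      · subst ha; simp
      rcases Nat.eq_zero_or_pos b with hb | hb
      · subst hb; simp
      have hredux : ∀ x y : ℕ, x ≤ y → 2^y - 1 = (2^(y-x) - 1) + 2^(y-x) * (2^x - 1) := by
        intro x y hxy
        have h1 : 2^(y-x) * 2^x = 2^y := by rw [← pow_add]; congr 1; omega
        have h2 : 1 ≤ 2^x := Nat.one_le_two_pow
        have h3 : 1 ≤ 2^(y-x) := Nat.one_le_two_pow
        have h4 : 2^(y-x) * (2^x - 1) = 2^(y-x) * 2^x - 2^(y-x) := by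
          rw [Nat.mul_sub, mul_one]
        have h5 : 2^(y-x) ≤ 2^(y-x) * 2^x := Nat.le_mul_of_pos_right _ (by omega)
        have h6 : 1 ≤ 2^y := Nat.one_le_two_pow
        omega
      rcases le_total a b with h | h
      · rw [hredux a b h, Nat.gcd_add_mul_right_right, ih a (b-a) (by omega),
          Nat.gcd_sub_self_right h]
      · rw [Nat.gcd_comm, hredux b a h, Nat.gcd_add_mul_right_right, Nat.gcd_comm,
          ih (a-b) b (by omega), Nat.gcd_comm (a-b) b, Nat.gcd_sub_self_right h, Nat.gcd_comm]
  exact key (a+b) a b le_rfl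

theorem fiber_card {A B : Type*} [AddCommGroup A] [Fintype A] [AddCommGroup B] [Fintype B]
    [DecidableEq B] (f : A →+ B) (hf : Function.Surjective f) (b : B) :
    (univ.filter fun a => f a = b).card * Fintype.card B = Fintype.card A := by
  classical
  have hcongr : ∀ b' : B, (univ.filter fun a => f a = b').card
      = (univ.filter fun a => f a = b).card := by
    intro b'
    obtain ⟨p, hp⟩ := hf b
    obtain ⟨p', hp'⟩ := hf b'
    apply Finset.card_bij (fun a _ => a + (p - p'))
    · intro a ha
      simp only [mem_filter, mem_univ, true_and] at ha ⊢
      rw [map_add, map_sub, hp, hp', ha]; abel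
    · intro a₁ h₁ a₂ h₂ h
      simpa using h
    · intro c hc
      refine ⟨c + (p' - p), ?_, by abel⟩
      simp only [mem_filter, mem_univ, true_and] at hc ⊢
      rw [map_add, map_sub, hp, hp', hc]; abel
  have h1 : Fintype.card A = ∑ b' : B, (univ.filter fun a => f a = b').card := by
    rw [← card_univ]
    exact Finset.card_eq_sum_card_fiberwise fun x _ => mem_univ _
  rw [h1, Finset.sum_congr rfl fun b' _ => hcongr b', Finset.sum_const, card_univ, smul_eq_mul,
    mul_comm]

section
variable (m : ℕ)
local notation "F" => GaloisField 2 m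

noncomputable def trHom : F →+ ZMod 2 :=
  (Algebra.trace (ZMod 2) F).toAddMonoidHom

lemma trHom_apply (x : F) : trHom m x = Tr m x := rfl

lemma tr_surj : Function.Surjective (Tr m) := Algebra.trace_surjective (ZMod 2) _

lemma Tr_add (x y : F) : Tr m (x + y) = Tr m x + Tr m y := map_add (trHom m) x y

lemma Tr_zero : Tr m (0 : F) = 0 := map_zero (trHom m)

lemma cardF (hm : m ≠ 0) : Fintype.card F = 2 ^ m := by
  rw [← Nat.card_eq_fintype_card, GaloisField.card _ _ hm]

lemma zmod2_cases (x : ZMod 2) : x = 0 ∨ x = 1 := by revert x; decide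

lemma tr_mul_surj {c : F} (hc : c ≠ 0) : ∃ w : F, Tr m (c * w) = 1 := by
  obtain ⟨w0, hw0⟩ := tr_surj m 1
  exact ⟨c⁻¹ * w0, by rw [← mul_assoc, mul_inv_cancel₀ hc, one_mul, hw0]⟩

lemma card_traceone (hm : m ≠ 0) :
    (univ.filter fun x : F => Tr m x = 1).card = 2 ^ (m - 1) := by
  have h := fiber_card (trHom m) (tr_surj m) 1
  rw [cardF m hm] at h
  have hB : Fintype.card (ZMod 2) = 2 := by simp
  rw [hB] at h
  have hm1 : 2 ^ m = 2 ^ (m-1) * 2 := by rw [← pow_succ]; congr 1; omega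
  simp only [trHom_apply] at h
  rw [hm1] at h
  exact Nat.eq_of_mul_eq_mul_right (by norm_num) h

lemma card_pairkernel (hm : 2 ≤ m) (c : F) (hc0 : c ≠ 0) (hc1 : c ≠ 1) :
    (univ.filter fun u : F => u ≠ 0 ∧ Tr m u = 0 ∧ Tr m (c * u) = 0).card
      = 2 ^ (m - 2) - 1 := by
  classical
  set φ : F →+ ZMod 2 × ZMod 2 :=
    (trHom m).prod ((trHom m).comp (AddMonoidHom.mulLeft c)) with hφ
  have hφ_apply : ∀ u : F, φ u = (Tr m u, Tr m (c * u)) := fun u => rfl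
  have h2 : (2 : F) = 0 := by
    have := CharTwo.two_eq_zero (R := F)
    exact this
  have hsurj : Function.Surjective φ := by
    have hc1' : (1 : F) + c ≠ 0 := by
      intro h
      apply hc1
      have : c = -1 := by linear_combination h
      rw [this, neg_eq_iff_add_eq_zero]
      linear_combination h2
    obtain ⟨w, hw⟩ := tr_mul_surj m hc1'
    have hw' : Tr m w + Tr m (c * w) = 1 := by
      rw [← Tr_add]
      rw [show w + c * w = (1 + c) * w by ring]
      exact hw
    obtain ⟨u0, hu0⟩ := tr_surj m 1
    obtain ⟨u1, hu1⟩ := tr_mul_surj m hc0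
    have he : ∃ e1 e2 : F, φ e1 = (1, 0) ∧ φ e2 = (0, 1) := by
      rcases zmod2_cases (Tr m w) with h0 | h1
      · -- φ w = (0, 1)
        have hcw : Tr m (c * w) = 1 := by rw [h0, zero_add] at hw'; exact hw'
        rcases zmod2_cases (Tr m (c * u0)) with g0 | g1
        · exact ⟨u0, w, by rw [hφ_apply, hu0, g0], by rw [hφ_apply, h0, hcw]⟩
        · refine ⟨u0 + w, w, ?_, by rw [hφ_apply, h0, hcw]⟩
          rw [hφ_apply, mul_add, Tr_add, Tr_add, hu0, h0, g1, hcw]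
          decide
      · -- φ w = (1, 0)
        have hcw : Tr m (c * w) = 0 := by
          rcases zmod2_cases (Tr m (c * w)) with g | g
          · exact g
          · rw [h1, g] at hw'; exact absurd hw' (by decide)
        rcases zmod2_cases (Tr m u1) with g0 | g1
        · exact ⟨w, u1, by rw [hφ_apply, h1, hcw], by rw [hφ_apply, g0, hu1]⟩
        · refine ⟨w, u1 + w, by rw [hφ_apply, h1, hcw], ?_⟩
          rw [hφ_apply, mul_add, Tr_add, Tr_add, g1, h1, hu1, hcw]
          decide
    obtain ⟨e1, e2, he1, he2⟩ := he
    intro p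
    obtain ⟨p1, p2⟩ := p
    rcases zmod2_cases p1 with h1 | h1 <;> rcases zmod2_cases p2 with hh2 | hh2 <;>
      subst h1 <;> subst hh2
    · exact ⟨0, by rw [map_zero]; rfl⟩
    · exact ⟨e2, he2⟩
    · exact ⟨e1, he1⟩
    · exact ⟨e1 + e2, by rw [map_add, he1, he2]; decide⟩
  have h := fiber_card φ hsurj (0, 0)
  rw [cardF m (by omega)] at h
  have hB : Fintype.card (ZMod 2 × ZMod 2) = 4 := by simp
  rw [hB] at h
  have hker : (univ.filter fun u : F => φ u = (0,0)).card = 2 ^ (m - 2) := by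
    have hm2 : 2 ^ m = 2 ^ (m-2) * 4 := by
      rw [show (4:ℕ) = 2^2 by norm_num, ← pow_add]; congr 1; omega
    omega
  have hset : (univ.filter fun u : F => u ≠ 0 ∧ Tr m u = 0 ∧ Tr m (c * u) = 0)
      = (univ.filter fun u : F => φ u = (0,0)).erase 0 := by
    ext u
    simp only [mem_erase, mem_filter, mem_univ, true_and, hφ_apply, Prod.mk.injEq]
  have hmem : (0 : F) ∈ univ.filter fun u : F => φ u = (0,0) := by
    simp only [mem_filter, mem_univ, true_and, map_zero]
    rfl
  rw [hset, card_erase_of_mem hmem, hker]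

lemma card_C (k ℓ : ℕ) (hm : 4 ≤ m) (hk1 : 1 ≤ k) (hl : ℓ = Nat.gcd k m) :
    (univ.filter fun c : F => c ^ (2^k) = c ∧ c ≠ 0 ∧ c ≠ 1).card = 2 ^ ℓ - 2 := by
  classical
  have hl1 : 1 ≤ ℓ := by
    rw [hl]; exact Nat.gcd_pos_of_pos_left m (show 0 < k by omega)
  set g : ℕ := 2 ^ ℓ - 1 with hg
  have hgg : g = Nat.gcd (2^k - 1) (2^m - 1) := by
    rw [gcd_two_pow_sub_one, ← hl]
  have hg1 : 1 ≤ g := by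
    have : (2:ℕ)^1 ≤ 2^ℓ := Nat.pow_le_pow_right (by norm_num) hl1
    omega
  have hgdvd : g ∣ 2^m - 1 := hgg ▸ Nat.gcd_dvd_right _ _
  have hgdvdk : g ∣ 2^k - 1 := hgg ▸ Nat.gcd_dvd_left _ _
  have hcardU : Fintype.card Fˣ = 2^m - 1 := by
    rw [← Nat.card_eq_fintype_card, Nat.card_units, GaloisField.card _ _ (by omega)]
  -- set equality
  have hiff : ∀ c : F, (c ^ (2^k) = c ∧ c ≠ 0 ∧ c ≠ 1) ↔ (c ^ g = 1 ∧ c ≠ 1) := by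
    intro c
    constructor
    · rintro ⟨hck, hc0, hc1⟩
      refine ⟨?_, hc1⟩
      have hpow : c ^ (2^k - 1) = 1 := by
        have hstep : c ^ (2^k - 1) * c = c ^ (2^k) := by
          rw [← pow_succ]; congr 1
          have : 1 ≤ 2^k := Nat.one_le_two_pow
          omega
        have : c ^ (2^k - 1) * c = 1 * c := by rw [hstep, hck, one_mul]
        exact mul_right_cancel₀ hc0 this
      have hord1 : orderOf c ∣ 2^k - 1 := orderOf_dvd_of_pow_eq_one hpow
      have hord2 : orderOf c ∣ 2^m - 1 := by
        apply orderOf_dvd_of_pow_eq_one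
        have := FiniteField.pow_card_sub_one_eq_one c hc0
        rwa [cardF m (by omega)] at this
      have : orderOf c ∣ g := hgg ▸ Nat.dvd_gcd hord1 hord2
      exact orderOf_dvd_iff_pow_eq_one.mp this
    · rintro ⟨hcg, hc1⟩
      have hc0 : c ≠ 0 := by
        intro h; rw [h, zero_pow (by omega)] at hcg; exact one_ne_zero hcg.symm
      refine ⟨?_, hc0, hc1⟩
      have hord : orderOf c ∣ 2^k - 1 := (orderOf_dvd_of_pow_eq_one hcg).trans hgdvdk
      have hpow : c ^ (2^k - 1) = 1 := orderOf_dvd_iff_pow_eq_one.mp hord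
      have : c ^ (2^k) = c ^ (2^k - 1) * c := by
        rw [← pow_succ]; congr 1
        have : 1 ≤ 2^k := Nat.one_le_two_pow
        omega
      rw [this, hpow, one_mul]
  -- primitive root
  have hNne : (2:ℕ)^m - 1 ≠ 0 := by
    have : (2:ℕ)^4 ≤ 2^m := Nat.pow_le_pow_right (by norm_num) hm
    omega
  obtain ⟨gen, hgen⟩ := IsCyclic.exists_ofOrder_eq_natCard (α := Fˣ)
  have hgenord : orderOf gen = 2^m - 1 := by
    rw [hgen, Nat.card_eq_fintype_card, hcardU]
  have hdivdvd : (2^m - 1) / g ∣ 2^m - 1 := Nat.div_dvd_of_dvd hgdvd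
  have hζord : orderOf (gen ^ ((2^m - 1) / g)) = g := by
    rw [orderOf_pow, hgenord, Nat.gcd_eq_right hdivdvd, Nat.div_div_self hgdvd hNne]
  have hprim : IsPrimitiveRoot ((gen ^ ((2^m - 1) / g) : Fˣ) : F) g := by
    have hpr := IsPrimitiveRoot.orderOf (gen ^ ((2^m - 1) / g))
    rw [hζord] at hpr
    exact IsPrimitiveRoot.coe_units_iff.mpr hpr
  have hroots : (univ.filter fun c : F => c ^ g = 1) = Polynomial.nthRootsFinset g (1 : F) := by
    ext c
    rw [mem_filter, Polynomial.mem_nthRootsFinset (by omega) (1 : F)]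
    simp
  have hcardroots : (univ.filter fun c : F => c ^ g = 1).card = g := by
    rw [hroots, hprim.card_nthRootsFinset]
  have hfilter : (univ.filter fun c : F => c ^ (2^k) = c ∧ c ≠ 0 ∧ c ≠ 1)
      = (univ.filter fun c : F => c ^ g = 1).erase 1 := by
    ext c
    simp only [mem_erase, mem_filter, mem_univ, true_and, hiff c]
    tauto
  have hone : (1 : F) ∈ univ.filter fun c : F => c ^ g = 1 := by
    simp
  rw [hfilter, card_erase_of_mem hone, hcardroots]
  omega

end


lemma card_four {α : Type*} [DecidableEq α] {a b e d : α} (hab : a ≠ b) (hae : a ≠ e)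
    (had : a ≠ d) (hbe : b ≠ e) (hbd : b ≠ d) (hed : e ≠ d) :
    ({a, b, e, d} : Finset α).card = 4 := by
  rw [card_insert_of_notMem (by simp [hab, hae, had]),
    card_insert_of_notMem (by simp [hbe, hbd]),
    card_insert_of_notMem (by simp [hed]), card_singleton]

lemma sum_four {α β : Type*} [DecidableEq α] [AddCommMonoid β] {a b e d : α} (hab : a ≠ b)
    (hae : a ≠ e) (had : a ≠ d) (hbe : b ≠ e) (hbd : b ≠ d) (hed : e ≠ d) (f : α → β) :
    ∑ x ∈ ({a, b, e, d} : Finset α), f x = f a + f b + f e + f d := by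
  rw [sum_insert (by simp [hab, hae, had]), sum_insert (by simp [hbe, hbd]),
    sum_insert (by simp [hed]), sum_singleton]
  abel

lemma card_triples {α : Type*} [DecidableEq α] (s : Finset α) (h4 : s.card = 4) :
    (((s ×ˢ s) ×ˢ s).filter fun r => r.1.1 ≠ r.1.2 ∧ r.1.1 ≠ r.2 ∧ r.1.2 ≠ r.2).card = 24 := by
  classical
  set D := ((s ×ˢ s) ×ˢ s).filter fun r => r.1.1 ≠ r.1.2 ∧ r.1.1 ≠ r.2 ∧ r.1.2 ≠ r.2 with hD
  have hmemD : ∀ r ∈ D, r.1.1 ∈ s := by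
    intro r hr
    rw [hD, mem_filter, mem_product] at hr
    exact (mem_product.mp hr.1.1).1
  have h : D.card = ∑ a ∈ s, (D.filter fun r => r.1.1 = a).card :=
    card_eq_sum_card_fiberwise hmemD
  have hfib : ∀ a ∈ s, (D.filter fun r => r.1.1 = a).card = 6 := by
    intro a ha
    have hbij : (D.filter fun r => r.1.1 = a).card = ((s.erase a).offDiag).card := by
      apply card_bij (fun r _ => (r.1.2, r.2))
      · rintro ⟨⟨x, b⟩, e⟩ hr
        simp only [mem_filter, hD, mem_product] at hr
        obtain ⟨⟨⟨⟨hxs, hbs⟩, hes⟩, hne1, hne2, hne3⟩, hxa⟩ := hr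
        subst hxa
        simp only [mem_offDiag, mem_erase]
        exact ⟨⟨fun h => hne1 h.symm, hbs⟩, ⟨fun h => hne2 h.symm, hes⟩, hne3⟩
      · rintro ⟨⟨x₁, b₁⟩, e₁⟩ h₁ ⟨⟨x₂, b₂⟩, e₂⟩ h₂ h
        simp only [mem_filter] at h₁ h₂
        simp only [Prod.mk.injEq] at h ⊢
        exact ⟨⟨h₁.2.trans h₂.2.symm, h.1⟩, h.2⟩
      · rintro ⟨b, e⟩ hbe
        simp only [mem_offDiag, mem_erase] at hbe
        obtain ⟨⟨hba, hbs⟩, ⟨hea, hes⟩, hbe'⟩ := hbe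
        refine ⟨((a, b), e), ?_, rfl⟩
        simp only [mem_filter, hD, mem_product]
        exact ⟨⟨⟨⟨ha, hbs⟩, hes⟩, fun h => hba h.symm, fun h => hea h.symm, hbe'⟩, trivial⟩
    rw [hbij, Finset.offDiag_card, card_erase_of_mem ha, h4]
  rw [h, Finset.sum_congr rfl hfib, Finset.sum_const, h4]
  rfl


lemma fourth {F : Type*} [Field F] (h2 : (2 : F) = 0) (s : Finset F) (h4 : s.card = 4)
    (hsum : ∑ x ∈ s, x = 0) {a b e : F} (ha : a ∈ s) (hb : b ∈ s) (he : e ∈ s)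
    (hab : a ≠ b) (hae : a ≠ e) (hbe : b ≠ e) :
    s = {a, b, e, a + b + e} ∧ a + b + e ≠ a ∧ a + b + e ≠ b ∧ a + b + e ≠ e := by
  classical
  have hb' : b ∈ s.erase a := mem_erase.mpr ⟨fun h => hab h.symm, hb⟩
  have he' : e ∈ (s.erase a).erase b := mem_erase.mpr ⟨fun h => hbe h.symm,
    mem_erase.mpr ⟨fun h => hae h.symm, he⟩⟩
  have hcard1 : (((s.erase a).erase b).erase e).card = 1 := by
    rw [card_erase_of_mem he', card_erase_of_mem hb', card_erase_of_mem ha, h4]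
  obtain ⟨d, hd⟩ := card_eq_one.mp hcard1
  have hdmem : d ∈ ((s.erase a).erase b).erase e := hd ▸ mem_singleton_self d
  have hde : d ≠ e := (mem_erase.mp hdmem).1
  have hdb : d ≠ b := (mem_erase.mp (mem_erase.mp hdmem).2).1
  have hda : d ≠ a := (mem_erase.mp (mem_erase.mp (mem_erase.mp hdmem).2).2).1
  have e3 : insert e {d} = (s.erase a).erase b := by rw [← hd]; exact insert_erase he'
  have e2 : insert b (insert e {d}) = s.erase a := by rw [e3]; exact insert_erase hb'
  have e1 : insert a (insert b (insert e {d})) = s := by rw [e2]; exact insert_erase ha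
  have hsum4 : a + b + e + d = 0 := by
    rw [← e1] at hsum
    rw [sum_four hab hae (fun h => hda h.symm) hbe (fun h => hdb h.symm)
      (fun h => hde h.symm) (fun x => x)] at hsum
    exact hsum
  have hdval : d = a + b + e := by linear_combination hsum4 - (a + b + e) * h2
  subst hdval
  exact ⟨e1.symm, hda, hdb, hde⟩


/-- Walsh transform `W_f(a,b) = Σ_x (-1)^{Tr(a f(x) + b x)}`. -/
noncomputable def Walsh (m : ℕ) (f : GaloisField 2 m → GaloisField 2 m)
    (a b : GaloisField 2 m) : ℤ :=
  ∑ x : GaloisField 2 m, (-1 : ℤ) ^ (Tr m (a * f x + b * x)).val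

/-- Count of 4-subsets of elements of trace one with vanishing sum and
vanishing `(2^k+1)`-power sum: `A_4^⊥ = 2^{m-1}(2^{m-2}-1)(2^ℓ-2)/4!`. -/
theorem stmt5 (m k : ℕ) (hm : 4 ≤ m) (hk1 : 1 ≤ k) (hkm : k < m)
    (ℓ : ℕ) (hl : ℓ = Nat.gcd k m) :
    24 * (Finset.univ.filter (fun s : Finset (GaloisField 2 m) =>
        s.card = 4 ∧ (∀ x ∈ s, x ≠ 0 ∧ Tr m x = 1)
        ∧ (∑ x ∈ s, x) = 0 ∧ (∑ x ∈ s, x ^ (2 ^ k + 1)) = 0)).card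
      = 2 ^ (m - 1) * (2 ^ (m - 2) - 1) * (2 ^ ℓ - 2) := by
  classical
  have h2 : (2 : GaloisField 2 m) = 0 := CharTwo.two_eq_zero
  set F := GaloisField 2 m with hF
  set S : Finset (Finset F) := Finset.univ.filter (fun s : Finset F =>
        s.card = 4 ∧ (∀ x ∈ s, x ≠ 0 ∧ Tr m x = 1)
        ∧ (∑ x ∈ s, x) = 0 ∧ (∑ x ∈ s, x ^ (2 ^ k + 1)) = 0) with hS
  set X : Finset F := univ.filter fun x : F => Tr m x = 1 with hX
  set W : Finset (F × F) := univ.filter (fun p : F × F =>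
      (p.2 ^ (2^k) = p.2 ∧ p.2 ≠ 0 ∧ p.2 ≠ 1)
      ∧ p.1 ≠ 0 ∧ Tr m p.1 = 0 ∧ Tr m (p.2 * p.1) = 0) with hW
  set T : Finset (F × (F × F)) := X ×ˢ W with hT
  set C : Finset F := univ.filter fun c : F => c ^ (2^k) = c ∧ c ≠ 0 ∧ c ≠ 1 with hC
  have tr1_ne : ∀ x : F, Tr m x = 1 → x ≠ 0 := by
    intro x hx h
    rw [h, Tr_zero] at hx
    exact (by decide : ¬ ((0:ZMod 2) = 1)) hx
  have honeone : (1 : ZMod 2) + 1 = 0 := by decide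
  have hmemT : ∀ t : F × (F × F), t ∈ T ↔ (Tr m t.1 = 1 ∧
      ((t.2.2 ^ (2^k) = t.2.2 ∧ t.2.2 ≠ 0 ∧ t.2.2 ≠ 1)
        ∧ t.2.1 ≠ 0 ∧ Tr m t.2.1 = 0 ∧ Tr m (t.2.2 * t.2.1) = 0)) := by
    intro t
    rw [hT, mem_product, hX, hW, mem_filter, mem_filter]
    simp only [mem_univ, true_and]
  set gmap : F × (F × F) → Finset F := fun t =>
    ({t.1, t.1 + t.2.1, t.1 + t.2.2 * t.2.1, t.1 + t.2.1 + t.2.2 * t.2.1} : Finset F)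
    with hgmap
  -- Step 1 : gmap maps T into S
  have step1 : ∀ t ∈ T, gmap t ∈ S := by
    rintro ⟨x, u, c⟩ ht
    obtain ⟨htrx, ⟨hck, hc0, hc1⟩, hu0, htru, htrcu⟩ := (hmemT _).mp ht
    have hcu0 : c * u ≠ 0 := mul_ne_zero hc0 hu0
    have hvne : u ≠ c * u := by
      intro h
      exact hc1 (mul_right_cancel₀ hu0 (by rw [← h, one_mul])).symm
    have d1 : x ≠ x + u := fun h => hu0 (left_eq_add.mp h)
    have d2 : x ≠ x + c * u := fun h => hcu0 (left_eq_add.mp h)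
    have d3 : x ≠ x + u + c * u := by
      intro h
      apply hvne
      have h0 : u + c * u = 0 := by linear_combination (-1 : F) * h
      linear_combination h0 - c * u * h2
    have d4 : x + u ≠ x + c * u := fun h => hvne (add_left_cancel h)
    have d5 : x + u ≠ x + u + c * u := fun h => hcu0 (left_eq_add.mp h)
    have d6 : x + c * u ≠ x + u + c * u := fun h => d1 (add_right_cancel h)
    have htr2 : Tr m (x + u) = 1 := by rw [Tr_add, htrx, htru, add_zero]
    have htr3 : Tr m (x + c * u) = 1 := by rw [Tr_add, htrx, htrcu, add_zero]
    have htr4 : Tr m (x + u + c * u) = 1 := by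
      rw [Tr_add, Tr_add, htrx, htru, htrcu, add_zero, add_zero]
    rw [hS, mem_filter]
    refine ⟨mem_univ _, card_four d1 d2 d3 d4 d5 d6, ?_, ?_, ?_⟩
    · intro y hy
      simp only [hgmap, mem_insert, mem_singleton] at hy
      rcases hy with rfl | rfl | rfl | rfl
      · exact ⟨tr1_ne _ htrx, htrx⟩
      · exact ⟨tr1_ne _ htr2, htr2⟩
      · exact ⟨tr1_ne _ htr3, htr3⟩
      · exact ⟨tr1_ne _ htr4, htr4⟩
    · rw [hgmap]
      rw [sum_four d1 d2 d3 d4 d5 d6 (fun y => y)]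
      linear_combination (2 * x + u + c * u) * h2
    · rw [hgmap]
      rw [sum_four d1 d2 d3 d4 d5 d6 (fun y => y ^ (2^k + 1))]
      simp only [pow_succ, add_pow_char_pow, mul_pow]
      rw [hck]
      linear_combination (2 * x * x^(2^k) + (1+c) * x * u^(2^k) + (1+c) * u * x^(2^k)
        + (1 + c + c^2) * u * u^(2^k)) * h2
  -- Step 2 : fiber decomposition
  have step2 : T.card = ∑ s ∈ S, (T.filter fun t => gmap t = s).card :=
    card_eq_sum_card_fiberwise step1
  -- Step 3 : each fiber has 24 elements
  have step3 : ∀ s ∈ S, (T.filter fun t => gmap t = s).card = 24 := by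
    intro s hs
    rw [hS, mem_filter] at hs
    obtain ⟨-, hcard4, hall, hsum, hpowsum⟩ := hs
    rw [← card_triples s hcard4]
    refine Finset.card_bij'
      (fun t _ => ((t.1, t.1 + t.2.1), t.1 + t.2.2 * t.2.1))
      (fun r _ => (r.1.1, (r.1.1 + r.1.2, (r.1.1 + r.2) * (r.1.1 + r.1.2)⁻¹)))
      ?hi ?hj ?linv ?rinv
    case hi =>
      rintro ⟨x, u, c⟩ ht
      rw [mem_filter] at ht
      obtain ⟨htT, hgt⟩ := ht
      obtain ⟨htrx, ⟨hck, hc0, hc1⟩, hu0, htru, htrcu⟩ := (hmemT _).mp htT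
      have hcu0 : c * u ≠ 0 := mul_ne_zero hc0 hu0
      have hvne : u ≠ c * u := by
        intro h
        exact hc1 (mul_right_cancel₀ hu0 (by rw [← h, one_mul])).symm
      have hx : x ∈ s := by rw [← hgt]; simp [hgmap]
      have hxu : x + u ∈ s := by rw [← hgt]; simp [hgmap]
      have hxcu : x + c * u ∈ s := by rw [← hgt]; simp [hgmap]
      rw [mem_filter, mem_product, mem_product]
      refine ⟨⟨⟨hx, hxu⟩, hxcu⟩, ?_, ?_, ?_⟩
      · exact fun h => hu0 (left_eq_add.mp h)
      · exact fun h => hcu0 (left_eq_add.mp h)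
      · exact fun h => hvne (add_left_cancel h)
    case hj =>
      rintro ⟨⟨a, b⟩, e⟩ hr
      rw [mem_filter, mem_product, mem_product] at hr
      obtain ⟨⟨⟨ha, hb⟩, he⟩, hab, hae, hbe⟩ := hr
      obtain ⟨hseq, hda, hdb, hde⟩ := fourth h2 s hcard4 hsum ha hb he hab hae hbe
      have hu0 : a + b ≠ 0 := by
        intro h; exact hab (by linear_combination h - b * h2)
      have hv0 : a + e ≠ 0 := by
        intro h; exact hae (by linear_combination h - e * h2)
      have huv : a + b ≠ a + e := fun h => hbe (add_left_cancel h)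
      have hcc0 : (a + e) * (a + b)⁻¹ ≠ 0 := mul_ne_zero hv0 (inv_ne_zero hu0)
      have hccu : (a + e) * (a + b)⁻¹ * (a + b) = a + e := inv_mul_cancel_right₀ hu0 _
      have hcc1 : (a + e) * (a + b)⁻¹ ≠ 1 := by
        intro h
        rw [h, one_mul] at hccu
        exact huv hccu
      have htra : Tr m a = 1 := (hall a ha).2
      have htrb : Tr m b = 1 := (hall b hb).2
      have htre : Tr m e = 1 := (hall e he).2
      have htru : Tr m (a + b) = 0 := by rw [Tr_add, htra, htrb, honeone]
      have htrv : Tr m (a + e) = 0 := by rw [Tr_add, htra, htre, honeone]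
      have htrcu : Tr m ((a + e) * (a + b)⁻¹ * (a + b)) = 0 := by rw [hccu]; exact htrv
      -- power-sum identity
      rw [hseq] at hpowsum
      rw [sum_four hab hae hda.symm hbe hdb.symm hde.symm (fun y => y ^ (2^k + 1))]
        at hpowsum
      simp only [pow_succ, add_pow_char_pow] at hpowsum
      have hkey : (a + b) * (a^(2^k) + e^(2^k)) = (a + e) * (a^(2^k) + b^(2^k)) := by
        linear_combination hpowsum - (a^(2^k)*a + b^(2^k)*b + e^(2^k)*e
          + a^(2^k)*e + b^(2^k)*a + b^(2^k)*e) * h2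
      have hueq : (a + b)^(2^k) = a^(2^k) + b^(2^k) := add_pow_char_pow ..
      have hveq : (a + e)^(2^k) = a^(2^k) + e^(2^k) := add_pow_char_pow ..
      have hkey2 : (a + b) * (a + e)^(2^k) = (a + e) * (a + b)^(2^k) := by
        rw [hueq, hveq]; exact hkey
      have hck : ((a + e) * (a + b)⁻¹) ^ (2^k) = (a + e) * (a + b)⁻¹ := by
        have huq0 : (a + b)^(2^k) ≠ 0 := pow_ne_zero _ hu0
        rw [mul_pow, inv_pow]
        rw [← div_eq_mul_inv, ← div_eq_mul_inv, div_eq_div_iff huq0 hu0]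
        linear_combination hkey2
      rw [mem_filter]
      constructor
      · rw [hmemT]
        exact ⟨htra, ⟨hck, hcc0, hcc1⟩, hu0, htru, htrcu⟩
      · -- gmap value is s
        have ha2 : a + (a + b) = b := by linear_combination a * h2
        have ha3 : a + (a + e) * (a + b)⁻¹ * (a + b) = e := by
          rw [hccu]; linear_combination a * h2
        have ha4 : a + (a + b) + (a + e) * (a + b)⁻¹ * (a + b) = a + b + e := by
          rw [hccu]; linear_combination a * h2
        show ({a, a + (a + b), a + (a + e) * (a + b)⁻¹ * (a + b),
            a + (a + b) + (a + e) * (a + b)⁻¹ * (a + b)} : Finset F) = s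
        rw [ha4, ha3, ha2]
        exact hseq.symm
    case linv =>
      rintro ⟨x, u, c⟩ ht
      rw [mem_filter] at ht
      obtain ⟨htT, -⟩ := ht
      obtain ⟨-, ⟨-, -, -⟩, hu0, -, -⟩ := (hmemT _).mp htT
      have hA : x + (x + u) = u := by linear_combination x * h2
      have hB : x + (x + c * u) = c * u := by linear_combination x * h2
      simp only [hA, hB, mul_inv_cancel_right₀ hu0]
    case rinv =>
      rintro ⟨⟨a, b⟩, e⟩ hr
      rw [mem_filter, mem_product, mem_product] at hr
      obtain ⟨⟨⟨ha, hb⟩, he⟩, hab, hae, hbe⟩ := hr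
      have hu0 : a + b ≠ 0 := by
        intro h; exact hab (by linear_combination h - b * h2)
      have h1 : a + (a + b) = b := by linear_combination a * h2
      have h3 : (a + e) * (a + b)⁻¹ * (a + b) = a + e := inv_mul_cancel_right₀ hu0 _
      have h4 : a + (a + e) = e := by linear_combination a * h2
      simp only [h1, h3, h4]
    -- counting T
  have hcardX : X.card = 2 ^ (m - 1) := card_traceone m (by omega)
  have hmemW : ∀ p ∈ W, p.2 ∈ C := by
    rintro ⟨u, c⟩ hp
    rw [hW, mem_filter] at hp
    rw [hC, mem_filter]
    exact ⟨mem_univ _, hp.2.1⟩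
  have hWfib : ∀ c ∈ C, (W.filter fun p => p.2 = c).card = 2 ^ (m - 2) - 1 := by
    intro c hc
    rw [hC, mem_filter] at hc
    obtain ⟨-, hck, hc0, hc1⟩ := hc
    rw [← card_pairkernel m (by omega) c hc0 hc1]
    apply Finset.card_bij (fun p _ => p.1)
    · rintro ⟨u, c'⟩ hp
      rw [mem_filter] at hp
      obtain ⟨hpW, hpc⟩ := hp
      rw [hW, mem_filter] at hpW
      simp only at hpc
      subst hpc
      simp only [mem_filter, mem_univ, true_and]
      exact hpW.2.2
    · rintro ⟨u₁, c₁⟩ h₁ ⟨u₂, c₂⟩ h₂ h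
      rw [mem_filter] at h₁ h₂
      simp only at h h₁ h₂
      rw [Prod.mk.injEq]
      exact ⟨h, h₁.2.trans h₂.2.symm⟩
    · intro u hu
      rw [mem_filter] at hu
      refine ⟨(u, c), ?_, rfl⟩
      rw [mem_filter, hW, mem_filter]
      exact ⟨⟨mem_univ _, ⟨hck, hc0, hc1⟩, hu.2⟩, rfl⟩
  have hcardC : C.card = 2 ^ ℓ - 2 := card_C m k ℓ hm hk1 hl
  have hcardW : W.card = (2 ^ ℓ - 2) * (2 ^ (m - 2) - 1) := by
    rw [card_eq_sum_card_fiberwise hmemW, Finset.sum_congr rfl hWfib, Finset.sum_const,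
      hcardC, smul_eq_mul]
  have hcardT : T.card = 2 ^ (m - 1) * ((2 ^ ℓ - 2) * (2 ^ (m - 2) - 1)) := by
    rw [hT, card_product, hcardX, hcardW]
  rw [step2, Finset.sum_congr rfl step3, Finset.sum_const, smul_eq_mul] at hcardT
  rw [mul_comm] at hcardT
  rw [hcardT]
  ring
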